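/- arXiv:2002.06663 — 2 statements merged into one kernel-verified Lean document; each statement's English description precedes it below -/
import Mathlib

section
/- Fix K ≥ 1 existing cluster labels 1, …, K, positive reals n₁, …, n_K (cluster sizes), γ > 0, λ ≥ 0, V > 0 and Z_H > 0, nonnegative integers m₁, …, m_K (the number of neighbors of observation i currently assigned to each label), and a measure G₀ on the label space assigning zero mass to {1, …, K}. Define H(c) = −λ·m_c for c ∈ {1, …, K} and H(c) = 0 otherwise. Then the measure obtained from Σ_{c=1}^K (n_c + γ)·δ_c + V·γ·G₀ by multiplying with the density c ↦ exp(−H(c))/Z_H equals Σ_{c=1}^K (n_c + γ)·(exp(λ·m_c)/Z_H)·δ_c + (V·γ/Z_H)·G₀. In particular, the MRFC-MFM full conditional of the cluster label z_i is proportional to (n_c + γ)·exp(λ·Σ_{l∈∂(i)} 1(z_l = c)) for an existing label c and to γ·V_n(K*+1)/V_n(K*) for a new label. (Corollary 1.) -/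
open MeasureTheory ENNReal

lemma withDensity_finset_sum {α ι : Type*} [MeasurableSpace α] (s : Finset ι)
    (μ : ι → Measure α) (f : α → ℝ≥0∞) :
    (∑ i ∈ s, μ i).withDensity f = ∑ i ∈ s, (μ i).withDensity f := by
  classical
  induction s using Finset.induction with
  | empty => simp
  | @insert a s h ih =>
      rw [Finset.sum_insert h, withDensity_add_measure, ih, Finset.sum_insert h]

lemma withDensity_dirac {α : Type*} [MeasurableSpace α] [MeasurableSingletonClass α]
    (a : α) (f : α → ℝ≥0∞) :
    (Measure.dirac a).withDensity f = f a • Measure.dirac a := by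
  classical
  ext s hs
  rw [withDensity_apply _ hs, setLIntegral_dirac f s, Measure.smul_apply,
    Measure.dirac_apply' _ hs, smul_eq_mul]
  by_cases h : a ∈ s <;> simp [h, Set.indicator_of_mem, Set.indicator_of_notMem]

/-- Corollary 1 (MRFC-MFM Pólya urn scheme): with existing labels `1, …, K`,
cluster sizes `n c > 0`, neighbor counts `m c`, spatial smoothness `λ ≥ 0`,
MFM new-table factor `V > 0` and MRF normalizing constant `Z_H > 0`, and the
MRF cost `H c = -λ * m c` for `c ∈ {1, …, K}` and `H c = 0` otherwise,
multiplying `∑ c, (n c + γ) • δ_c + V·γ • G₀` by the density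
`c ↦ exp (-H c) / Z_H` gives
`∑ c, (n c + γ) * exp (λ * m c) / Z_H • δ_c + (V·γ / Z_H) • G₀`; in particular
the full conditional of `z_i` is proportional to `(n c + γ) * exp (λ * m c)`
at an existing label `c` and to `V·γ` at a new label. -/
theorem mrfc_mfm_polya_urn
    (K : ℕ) (hK : 1 ≤ K)
    (n : ℕ → ℝ) (hn : ∀ c ∈ Finset.Icc 1 K, 0 < n c)
    (γ lam V ZH : ℝ) (hγ : 0 < γ) (hlam : 0 ≤ lam) (hV : 0 < V) (hZ : 0 < ZH)
    (m : ℕ → ℕ)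
    (G₀ : Measure ℕ) (hG₀ : G₀ ((Finset.Icc 1 K : Finset ℕ) : Set ℕ) = 0)
    (H : ℕ → ℝ)
    (hH : ∀ c, H c = if c ∈ Finset.Icc 1 K then -(lam * (m c : ℝ)) else 0) :
    ((∑ c ∈ Finset.Icc 1 K, ENNReal.ofReal (n c + γ) • Measure.dirac c)
        + ENNReal.ofReal (V * γ) • G₀).withDensity
        (fun c => ENNReal.ofReal (Real.exp (-H c) / ZH))
      = (∑ c ∈ Finset.Icc 1 K,
          ENNReal.ofReal ((n c + γ) * (Real.exp (lam * (m c : ℝ)) / ZH)) •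
            Measure.dirac c)
        + ENNReal.ofReal (V * γ / ZH) • G₀ := by
  set f : ℕ → ℝ≥0∞ := fun c => ENNReal.ofReal (Real.exp (-H c) / ZH) with hf
  rw [withDensity_add_measure, withDensity_finset_sum]
  congr 1
  · refine Finset.sum_congr rfl fun c hc => ?_
    rw [withDensity_smul_measure, withDensity_dirac, smul_smul]
    congr 1
    rw [hf]
    simp only [hH c, if_pos hc, neg_neg]
    rw [← ENNReal.ofReal_mul (by have := hn c hc; linarith)]
  · rw [withDensity_smul_measure]
    have h0 : ∀ᵐ c ∂G₀, c ∉ ((Finset.Icc 1 K : Finset ℕ) : Set ℕ) := by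
      rw [ae_iff]
      simpa only [not_not, Set.setOf_mem_eq] using hG₀
    have hae : f =ᵐ[G₀] fun _ => ENNReal.ofReal (1 / ZH) := by
      filter_upwards [h0] with c hc
      have hc' : c ∉ Finset.Icc 1 K := by simpa using hc
      rw [hf]
      simp only [hH c, if_neg hc', neg_zero, Real.exp_zero, one_div]
    rw [withDensity_congr_ae hae, withDensity_const, smul_smul,
      ← ENNReal.ofReal_mul (by positivity)]
    congr 1
    ring
end

section
/- Let Y₁, Y₂, … be independent and identically distributed nonnegative real random variables with 0 < E[Y₁] < ∞, let F be their common CDF with quantile function Q(t) = inf{y : F(y) ≥ t}, and let L(p) = (1/E[Y₁])·∫₀^p Q(t) dt be the population Lorenz curve. For each n, let Y_{(1)} ≤ ⋯ ≤ Y_{(n)} be the order statistics of Y₁, …, Y_n and define the empirical Lorenz curve at the grid points p_k = k/n by L̂_n(p_k) = (Σ_{j=1}^k Y_{(j)})/(Σ_{j=1}^n Y_{(j)}). Then almost surely, max_{1 ≤ k ≤ n} |L̂_n(k/n) − L(k/n)| → 0 as n → ∞; that is, the empirical Lorenz curve converges uniformly and almost surely to the population Lorenz curve. -/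
open MeasureTheory intervalIntegral Set ProbabilityTheory Filter

section Quantile
variable {ν : Measure ℝ} [IsProbabilityMeasure ν]

noncomputable def qf (ν : Measure ℝ) (t : ℝ) : ℝ := sInf {y : ℝ | t ≤ cdf ν y}

lemma cdf_neg_eq_zero (hsupp : ν (Iio 0) = 0) {y : ℝ} (hy : y < 0) : cdf ν y = 0 := by
  rw [cdf_eq_real, measureReal_def]
  have : ν (Iic y) = 0 := measure_mono_null (Iic_subset_Iio.2 hy) hsupp
  simp [this]

lemma qf_set_nonempty {t : ℝ} (ht : t < 1) : {y : ℝ | t ≤ cdf ν y}.Nonempty := by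
  have h2 : ∀ᶠ y in atTop, t < cdf ν y :=
    (tendsto_cdf_atTop (μ := ν)).eventually (eventually_gt_nhds ht)
  rcases h2.exists with ⟨y, hy⟩
  exact ⟨y, hy.le⟩

lemma qf_set_bddBelow (hsupp : ν (Iio 0) = 0) {t : ℝ} (ht : 0 < t) :
    BddBelow {y : ℝ | t ≤ cdf ν y} := by
  refine ⟨0, fun y hy => ?_⟩
  by_contra h
  push_neg at h
  rw [mem_setOf_eq, cdf_neg_eq_zero hsupp h] at hy
  linarith

lemma qf_nonneg (hsupp : ν (Iio 0) = 0) {t : ℝ} (ht : 0 < t) : 0 ≤ qf ν t := by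
  by_cases hne : {y : ℝ | t ≤ cdf ν y}.Nonempty
  · refine le_csInf hne fun y hy => ?_
    by_contra h
    push_neg at h
    rw [mem_setOf_eq, cdf_neg_eq_zero hsupp h] at hy
    linarith
  · rw [qf, Set.not_nonempty_iff_eq_empty.mp hne, Real.sInf_empty]

lemma qf_mem (hsupp : ν (Iio 0) = 0) {t : ℝ} (ht0 : 0 < t) (ht1 : t < 1) :
    t ≤ cdf ν (qf ν t) := by
  have hne := qf_set_nonempty (ν := ν) ht1
  have hbd := qf_set_bddBelow hsupp ht0
  have key : ∀ᶠ y in nhdsWithin (qf ν t) (Ioi (qf ν t)), t ≤ cdf ν y := by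
    filter_upwards [self_mem_nhdsWithin] with y hy
    obtain ⟨y', hy', hlt⟩ := Real.lt_sInf_add_pos hne (sub_pos.mpr hy)
    have h3 : sInf {y | t ≤ cdf ν y} = qf ν t := rfl
    have h4 : y' ≤ y := by rw [h3] at hlt; linarith
    exact le_trans hy' (monotone_cdf _ h4)
  have hrc : Tendsto (cdf ν) (nhdsWithin (qf ν t) (Ioi (qf ν t))) (nhds (cdf ν (qf ν t))) :=
    ((cdf ν).right_continuous _).tendsto.mono_left (nhdsWithin_mono _ Ioi_subset_Ici_self)
  exact ge_of_tendsto hrc key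

/-- The key Galois-type equivalence. -/
lemma qf_le_iff (hsupp : ν (Iio 0) = 0) {t : ℝ} (ht0 : 0 < t) (ht1 : t < 1) (y : ℝ) :
    qf ν t ≤ y ↔ t ≤ cdf ν y := by
  constructor
  · intro h
    exact le_trans (qf_mem hsupp ht0 ht1) (monotone_cdf _ h)
  · intro h
    exact csInf_le (qf_set_bddBelow hsupp ht0) h

lemma qf_monotoneOn (hsupp : ν (Iio 0) = 0) : MonotoneOn (qf ν) (Ioo (0:ℝ) 1) := by
  intro s hs t ht hst
  exact (qf_le_iff hsupp hs.1 hs.2 _).mpr (le_trans hst (qf_mem hsupp ht.1 ht.2))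

variable {ν : Measure ℝ} [IsProbabilityMeasure ν]

lemma qf_nonpos_eq_zero {t : ℝ} (ht : t ≤ 0) : qf ν t = 0 := by
  have : {y : ℝ | t ≤ cdf ν y} = univ := eq_univ_of_forall fun y => le_trans ht (cdf_nonneg ν y)
  rw [qf, this]
  exact Real.sInf_of_not_bddBelow (by simpa using not_bddBelow_univ)

lemma qf_gt_one_eq_zero {t : ℝ} (ht : 1 < t) : qf ν t = 0 := by
  have : {y : ℝ | t ≤ cdf ν y} = ∅ := by
    ext y; simp only [mem_setOf_eq, mem_empty_iff_false, iff_false, not_le]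
    exact lt_of_le_of_lt (cdf_le_one ν y) ht
  rw [qf, this, Real.sInf_empty]

lemma qf_measurable (hsupp : ν (Iio 0) = 0) : Measurable (qf ν) := by
  apply measurable_of_Iic
  intro y
  have hpre : qf ν ⁻¹' Iic y =
      (Ioo 0 1 ∩ Iic (cdf ν y)) ∪ ((Iic 0 ∪ Ioi 1) ∩ {t : ℝ | (0:ℝ) ≤ y}) ∪
        ({1} ∩ {t : ℝ | qf ν 1 ≤ y}) := by
    ext t
    simp only [mem_preimage, mem_Iic, mem_union, mem_inter_iff, mem_Ioo, mem_Ioi,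
      mem_setOf_eq, mem_singleton_iff]
    rcases le_or_gt t 0 with ht | ht
    · rw [qf_nonpos_eq_zero ht]
      constructor
      · intro h; exact Or.inl (Or.inr ⟨Or.inl ht, h⟩)
      · rintro ((⟨⟨h1, _⟩, _⟩ | ⟨_, h⟩) | ⟨h1, _⟩) <;> [linarith; exact h; linarith]
    rcases lt_trichotomy t 1 with ht1 | ht1 | ht1
    · rw [qf_le_iff hsupp ht ht1]
      constructor
      · intro h; exact Or.inl (Or.inl ⟨⟨ht, ht1⟩, h⟩)
      · rintro ((⟨_, h⟩ | ⟨h1, _⟩) | ⟨h1, _⟩)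
        · exact h
        · rcases h1 with h1 | h1 <;> linarith
        · linarith
    · subst ht1
      constructor
      · intro h; exact Or.inr ⟨rfl, h⟩
      · rintro ((⟨⟨_, h1⟩, _⟩ | ⟨h1, _⟩) | ⟨_, h⟩)
        · linarith
        · rcases h1 with h1 | h1 <;> linarith
        · exact h
    · rw [qf_gt_one_eq_zero ht1]
      constructor
      · intro h; exact Or.inl (Or.inr ⟨Or.inr ht1, h⟩)
      · rintro ((⟨⟨_, h1⟩, _⟩ | ⟨_, h⟩) | ⟨h1, _⟩) <;> [linarith; exact h; linarith]
  rw [hpre]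
  have h1 : MeasurableSet {t : ℝ | (0:ℝ) ≤ y} := by
    by_cases h : (0:ℝ) ≤ y <;> simp [h]
  have h2 : MeasurableSet {t : ℝ | qf ν 1 ≤ y} := by
    by_cases h : qf ν 1 ≤ y <;> simp [h]
  exact ((measurableSet_Ioo.inter measurableSet_Iic).union
    ((measurableSet_Iic.union measurableSet_Ioi).inter h1)).union
    ((measurableSet_singleton 1).inter h2)

lemma qf_map (hsupp : ν (Iio 0) = 0) :
    Measure.map (qf ν) (volume.restrict (Ioo (0:ℝ) 1)) = ν := by
  have hm := qf_measurable hsupp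
  have hfin : IsFiniteMeasure (Measure.map (qf ν) (volume.restrict (Ioo (0:ℝ) 1))) := by
    constructor
    rw [Measure.map_apply hm MeasurableSet.univ]
    simp [Real.volume_Ioo]
  refine MeasureTheory.Measure.ext_of_Iic _ _ fun y => ?_
  rw [Measure.map_apply hm measurableSet_Iic,
    Measure.restrict_apply (hm measurableSet_Iic)]
  have hiff : ∀ t ∈ Ioo (0:ℝ) 1, (qf ν t ≤ y ↔ t ≤ cdf ν y) := fun t ht =>
    qf_le_iff hsupp ht.1 ht.2 y
  have hset : qf ν ⁻¹' Iic y ∩ Ioo 0 1 = Ioo 0 1 ∩ Iic (cdf ν y) := by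
    ext t
    simp only [mem_inter_iff, mem_preimage, mem_Iic, mem_Ioo]
    constructor
    · rintro ⟨h, ht⟩; exact ⟨ht, (hiff t ht).mp h⟩
    · rintro ⟨ht, h⟩; exact ⟨(hiff t ht).mpr h, ht⟩
  rw [hset, ← ofReal_cdf ν y]
  rcases lt_or_ge (cdf ν y) 1 with hc | hc
  · have : Ioo (0:ℝ) 1 ∩ Iic (cdf ν y) = Ioc 0 (cdf ν y) := by
      ext t
      simp only [mem_inter_iff, mem_Ioo, mem_Iic, mem_Ioc]
      constructor
      · rintro ⟨⟨h1, _⟩, h2⟩; exact ⟨h1, h2⟩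
      · rintro ⟨h1, h2⟩; exact ⟨⟨h1, lt_of_le_of_lt h2 hc⟩, h2⟩
    rw [this, Real.volume_Ioc, sub_zero]
  · have hc1 : cdf ν y = 1 := le_antisymm (cdf_le_one ν y) hc
    have : Ioo (0:ℝ) 1 ∩ Iic (cdf ν y) = Ioo 0 1 := by
      rw [hc1]
      exact inter_eq_self_of_subset_left fun t ht => le_of_lt ht.2
    rw [this, Real.volume_Ioo, hc1, sub_zero]

section Integrals
variable {ν : Measure ℝ} [IsProbabilityMeasure ν]

lemma qf_integral_eq (hsupp : ν (Iio 0) = 0) {g : ℝ → ℝ} (hg : Measurable g) :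
    ∫ t in Ioo (0:ℝ) 1, g (qf ν t) = ∫ x, g x ∂ν := by
  have h := integral_map (φ := qf ν) (μ := volume.restrict (Ioo (0:ℝ) 1))
    (qf_measurable hsupp).aemeasurable (f := g) hg.aestronglyMeasurable
  rw [qf_map hsupp] at h
  exact h.symm

lemma qf_integrable_comp (hsupp : ν (Iio 0) = 0) {g : ℝ → ℝ} (hg : Measurable g)
    (hgint : Integrable g ν) :
    IntegrableOn (fun t => g (qf ν t)) (Ioo (0:ℝ) 1) := by
  have := (integrable_map_measure hg.aestronglyMeasurable
    (qf_measurable hsupp).aemeasurable).mp (by rwa [qf_map hsupp])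
  exact this

lemma min_integrable (hid : Integrable (fun x : ℝ => x) ν) (c : ℝ) :
    Integrable (fun x => min x c) ν := by
  have := hid.inf (integrable_const c)
  exact this

lemma qf_integrable (hsupp : ν (Iio 0) = 0) (hid : Integrable (fun x : ℝ => x) ν) :
    IntegrableOn (qf ν) (Ioo (0:ℝ) 1) := by
  have h := qf_integrable_comp hsupp (g := fun x : ℝ => x) measurable_id hid
  exact h

lemma split01 {f : ℝ → ℝ} (hf : IntegrableOn f (Ioc (0:ℝ) 1)) {p : ℝ}
    (hp : 0 ≤ p) (hp1 : p ≤ 1) :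
    ∫ t in Ioo (0:ℝ) 1, f t = (∫ t in Ioc 0 p, f t) + ∫ t in Ioc p 1, f t := by
  rw [← integral_Ioc_eq_integral_Ioo, ← Ioc_union_Ioc_eq_Ioc hp hp1,
    setIntegral_union (Ioc_disjoint_Ioc_of_le le_rfl) measurableSet_Ioc
      (hf.mono_set (Ioc_subset_Ioc_right hp1)) (hf.mono_set (Ioc_subset_Ioc_left hp))]

end Integrals

section Pop
variable {ν : Measure ℝ} [IsProbabilityMeasure ν]

lemma qf_min_integrableOn (hsupp : ν (Iio 0) = 0) (hid : Integrable (fun x : ℝ => x) ν)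
    (c : ℝ) : IntegrableOn (fun t => min (qf ν t) c) (Ioc (0:ℝ) 1) :=
  (qf_integrable_comp hsupp (measurable_id.min measurable_const)
    (min_integrable hid c)).congr_set_ae Ioo_ae_eq_Ioc.symm

lemma qf_integrableOn_Ioc (hsupp : ν (Iio 0) = 0) (hid : Integrable (fun x : ℝ => x) ν) :
    IntegrableOn (qf ν) (Ioc (0:ℝ) 1) :=
  (qf_integrable hsupp hid).congr_set_ae Ioo_ae_eq_Ioc.symm

lemma pop_le (hsupp : ν (Iio 0) = 0) (hid : Integrable (fun x : ℝ => x) ν)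
    {p : ℝ} (hp : 0 < p) (hp1 : p ≤ 1) (c : ℝ) :
    (∫ t in Ioo (0:ℝ) 1, min (qf ν t) c) - c * (1 - p) ≤ ∫ t in Ioc (0:ℝ) p, qf ν t := by
  have hmini := qf_min_integrableOn hsupp hid c
  have hQi := qf_integrableOn_Ioc hsupp hid
  rw [split01 hmini hp.le hp1]
  have b1 : (∫ t in Ioc (0:ℝ) p, min (qf ν t) c) ≤ ∫ t in Ioc (0:ℝ) p, qf ν t :=
    setIntegral_mono_on (hmini.mono_set (Ioc_subset_Ioc_right hp1))
      (hQi.mono_set (Ioc_subset_Ioc_right hp1)) measurableSet_Ioc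
      (fun t _ => min_le_left _ _)
  have b2 : (∫ t in Ioc p 1, min (qf ν t) c) ≤ c * (1 - p) := by
    have : (∫ t in Ioc p 1, min (qf ν t) c) ≤ ∫ _t in Ioc p 1, c :=
      setIntegral_mono_on (hmini.mono_set (Ioc_subset_Ioc_left hp.le))
        (integrable_const c) measurableSet_Ioc (fun t _ => min_le_right _ _)
    rw [setIntegral_const, Real.volume_real_Ioc_of_le hp1,
      smul_eq_mul, mul_comm] at this
    exact this
  linarith

lemma pop_ge (hsupp : ν (Iio 0) = 0) (hid : Integrable (fun x : ℝ => x) ν)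
    {p : ℝ} (hp : 0 < p) (hp1 : p < 1) :
    ∫ t in Ioc (0:ℝ) p, qf ν t ≤
      (∫ t in Ioo (0:ℝ) 1, min (qf ν t) (qf ν p)) - qf ν p * (1 - p) := by
  set c := qf ν p with hc
  have hmini := qf_min_integrableOn hsupp hid c
  rw [split01 hmini hp.le hp1.le]
  have e1 : (∫ t in Ioc (0:ℝ) p, min (qf ν t) c) = ∫ t in Ioc (0:ℝ) p, qf ν t := by
    refine setIntegral_congr_fun measurableSet_Ioc fun t ht => ?_
    exact min_eq_left (qf_monotoneOn hsupp ⟨ht.1, lt_of_le_of_lt ht.2 hp1⟩ ⟨hp, hp1⟩ ht.2)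
  have e2 : (∫ t in Ioc p 1, min (qf ν t) c) = c * (1 - p) := by
    rw [integral_Ioc_eq_integral_Ioo]
    have : (∫ t in Ioo p 1, min (qf ν t) c) = ∫ _t in Ioo p 1, c := by
      refine setIntegral_congr_fun measurableSet_Ioo fun t ht => ?_
      exact min_eq_right (qf_monotoneOn hsupp ⟨hp, hp1⟩ ⟨lt_trans hp ht.1, ht.2⟩ ht.1.le)
    rw [this, setIntegral_const, Real.volume_real_Ioo_of_le hp1.le,
      smul_eq_mul, mul_comm]
  rw [e1, e2]
  linarith

end Pop

section Lists

lemma take_sum_ge (l : List ℝ) {k : ℕ} (hk : k ≤ l.length) (c : ℝ) :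
    (l.map (fun x => min x c)).sum - ((l.length : ℝ) - k) * c ≤ (l.take k).sum := by
  have hsplit : (l.map (fun x => min x c)).sum
      = ((l.take k).map (fun x => min x c)).sum + ((l.drop k).map (fun x => min x c)).sum := by
    conv_lhs => rw [← List.take_append_drop k l]
    rw [List.map_append, List.sum_append]
  have h1 : ((l.take k).map (fun x => min x c)).sum ≤ (l.take k).sum := by
    have := List.sum_le_sum (l := l.take k) (f := fun x => min x c) (g := id)
      (fun x _ => min_le_left x c)
    simpa using this
  have h2 : ((l.drop k).map (fun x => min x c)).sum ≤ ((l.length - k : ℕ) : ℝ) * c := by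
    have := List.sum_le_card_nsmul ((l.drop k).map (fun x => min x c)) c
      (by intro x hx; obtain ⟨y, _, rfl⟩ := List.mem_map.mp hx; exact min_le_right y c)
    simpa [List.length_drop, nsmul_eq_mul] using this
  have hcast : ((l.length - k : ℕ) : ℝ) = (l.length : ℝ) - k := by
    rw [Nat.cast_sub hk]
  rw [hcast] at h2
  linarith

lemma take_sum_eq (l : List ℝ) {k : ℕ} (hk : k ≤ l.length) {c : ℝ}
    (hc1 : ∀ x ∈ l.take k, x ≤ c) (hc2 : ∀ x ∈ l.drop k, c ≤ x) :
    (l.take k).sum = (l.map (fun x => min x c)).sum - ((l.length : ℝ) - k) * c := by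
  have hsplit : (l.map (fun x => min x c)).sum
      = ((l.take k).map (fun x => min x c)).sum + ((l.drop k).map (fun x => min x c)).sum := by
    conv_lhs => rw [← List.take_append_drop k l]
    rw [List.map_append, List.sum_append]
  have e1 : ((l.take k).map (fun x => min x c)).sum = (l.take k).sum := by
    have : (l.take k).map (fun x => min x c) = (l.take k).map id :=
      List.map_congr_left (fun x hx => by simpa using min_eq_left (hc1 x hx))
    rw [this, List.map_id]
  have e2 : ((l.drop k).map (fun x => min x c)).sum = ((l.length - k : ℕ) : ℝ) * c := by
    have : (l.drop k).map (fun x => min x c) = (l.drop k).map (fun _ => c) :=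
      List.map_congr_left (fun x hx => min_eq_right (hc2 x hx))
    rw [this, List.map_const', List.sum_replicate, List.length_drop, nsmul_eq_mul]
  have hcast : ((l.length - k : ℕ) : ℝ) = (l.length : ℝ) - k := by
    rw [Nat.cast_sub hk]
  rw [hsplit, e1, e2, hcast]
  ring

lemma sorted_pivot (l : List ℝ) (hs : l.Pairwise (· ≤ ·)) {k : ℕ} (hk1 : 1 ≤ k)
    (hk : k ≤ l.length) :
    (∀ x ∈ l.take k, x ≤ l[k-1]'(by omega)) ∧ (∀ x ∈ l.drop k, l[k-1]'(by omega) ≤ x) := by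
  have hkl : k - 1 < l.length := by omega
  constructor
  · intro x hx
    rw [List.mem_take_iff_getElem] at hx
    obtain ⟨i, hi, rfl⟩ := hx
    have hik : i ≤ k - 1 := by omega
    have : l.get ⟨i, by omega⟩ ≤ l.get ⟨k-1, hkl⟩ :=
      List.Pairwise.rel_get_of_le hs (by simpa using hik)
    simpa using this
  · intro x hx
    rw [List.mem_drop_iff_getElem] at hx
    obtain ⟨i, hi, rfl⟩ := hx
    have : l.get ⟨k-1, hkl⟩ ≤ l.get ⟨k + i, by omega⟩ :=
      List.Pairwise.rel_get_of_le hs (by simp; omega)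
    simpa using this

end Lists

section Unif

lemma min_lip (a b c : ℝ) : |min a b - min a c| ≤ |b - c| := by
  have h1 := le_abs_self (b - c)
  have h2 := neg_abs_le (b - c)
  rcases le_total a b with h | h <;> rcases le_total a c with h' | h' <;>
    rw [abs_sub_le_iff] <;> constructor <;>
    simp only [min_eq_left, min_eq_right, h, h'] <;> linarith

lemma unif_conv (m : ℝ → ℝ) (mn : ℕ → ℝ → ℝ) (A : ℕ → ℝ) (θ : ℝ) (hθ : 0 < θ)
    (hA : Filter.Tendsto A Filter.atTop (nhds θ))
    (hq : ∀ q : ℚ, Filter.Tendsto (fun n => mn n (q : ℝ)) Filter.atTop (nhds (m (q : ℝ))))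
    (hmlip : ∀ c c', |m c - m c'| ≤ |c - c'|)
    (hmnlip : ∀ n c c', |mn n c - mn n c'| ≤ |c - c'|)
    (hmono : Monotone m) (hmnmono : ∀ n, Monotone (mn n))
    (hmA : ∀ n c, mn n c ≤ A n) (hmθ : ∀ c, m c ≤ θ)
    (hlow : ∀ n, 1 ≤ n → ∀ c ≤ 0, mn n c = m c)
    (htail : ∀ ε > 0, ∃ q : ℚ, 0 ≤ q ∧ θ - m (q : ℝ) < ε) :
    ∀ ε > 0, ∃ N, ∀ n ≥ N, ∀ c, |mn n c - m c| ≤ ε := by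
  intro ε hε
  obtain ⟨q1, hq1pos, hq1⟩ := htail (ε/4) (by linarith)
  set C : ℝ := (q1 : ℝ) with hCdef
  have hC0 : 0 ≤ C := by rw [hCdef]; exact_mod_cast hq1pos
  set Mp : ℕ := ⌈C * 4 / ε⌉₊ + 1 with hMp
  have hMp0 : 0 < Mp := Nat.succ_pos _
  have hMpR : (0:ℝ) < Mp := by exact_mod_cast hMp0
  have hmesh : C / Mp ≤ ε / 4 := by
    rw [div_le_iff₀ hMpR]
    have h1 : C * 4 / ε ≤ Mp := by
      have := Nat.le_ceil (C * 4 / ε)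
      have h2 : ((⌈C * 4 / ε⌉₊ : ℝ)) ≤ Mp := by exact_mod_cast Nat.le_succ _
      linarith
    rw [div_le_iff₀ hε] at h1
    linarith
  set grid : ℕ → ℚ := fun j => q1 * j / Mp with hgrid_def
  have hgridMp : ((grid Mp : ℚ) : ℝ) = C := by
    rw [hgrid_def]
    push_cast
    field_simp
    exact hCdef.symm
  have hev : ∀ᶠ n in Filter.atTop,
      (∀ j ∈ Finset.range (Mp+1), |mn n ((grid j : ℚ) : ℝ) - m ((grid j : ℚ) : ℝ)| ≤ ε/4)
        ∧ |A n - θ| ≤ ε/4 ∧ 1 ≤ n := by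
    refine Filter.Eventually.and ?_ (Filter.Eventually.and ?_ (Filter.eventually_ge_atTop 1))
    · rw [Filter.eventually_all_finset]
      intro j _
      have := Metric.tendsto_atTop.mp (hq (grid j)) (ε/4) (by linarith)
      obtain ⟨N, hN⟩ := this
      refine Filter.eventually_atTop.mpr ⟨N, fun n hn => ?_⟩
      have := hN n hn
      rw [Real.dist_eq] at this
      linarith
    · have := Metric.tendsto_atTop.mp hA (ε/4) (by linarith)
      obtain ⟨N, hN⟩ := this
      refine Filter.eventually_atTop.mpr ⟨N, fun n hn => ?_⟩
      have := hN n hn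
      rw [Real.dist_eq] at this
      linarith
  obtain ⟨N, hN⟩ := Filter.eventually_atTop.mp hev
  refine ⟨N, fun n hn c => ?_⟩
  obtain ⟨hgrid, hAe, hn1⟩ := hN n hn
  rcases le_or_gt c 0 with hc | hc
  · rw [hlow n hn1 c hc, sub_self, abs_zero]; linarith
  rcases le_or_gt c C with hcC | hcC
  · have hCpos : 0 < C := lt_of_lt_of_le hc hcC
    set j : ℕ := ⌊c * Mp / C⌋₊ with hj
    have hx0 : 0 ≤ c * Mp / C := by positivity
    have hjle : j ≤ Mp := by
      have hle : c * Mp / C ≤ (Mp : ℝ) := by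
        rw [div_le_iff₀ hCpos]
        nlinarith
      calc j ≤ ⌊(Mp : ℝ)⌋₊ := Nat.floor_le_floor hle
        _ = Mp := Nat.floor_natCast _
    have hjmem : j ∈ Finset.range (Mp + 1) := Finset.mem_range.mpr (by omega)
    set g : ℝ := ((grid j : ℚ) : ℝ) with hg
    have hgval : g = (j : ℝ) * C / Mp := by
      rw [hg, hgrid_def]
      push_cast
      ring
    have hgle : g ≤ c := by
      rw [hgval, div_le_iff₀ hMpR]
      have := Nat.floor_le hx0
      rw [hj] at *
      calc (⌊c * Mp / C⌋₊ : ℝ) * C ≤ (c * Mp / C) * C := by nlinarith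
        _ = c * Mp := by field_simp
    have hcg : c - g ≤ ε/4 := by
      have h5 : c * Mp / C < (j : ℝ) + 1 := Nat.lt_floor_add_one _
      have h6 : c * Mp < ((j:ℝ) + 1) * C := by
        rw [div_lt_iff₀ hCpos] at h5
        linarith
      have h7 : c < g + C / Mp := by
        rw [hgval, ← add_div, lt_div_iff₀ hMpR]
        nlinarith
      linarith
    have t1 := hmnlip n c g
    have t2 := hgrid j hjmem
    have t3 := hmlip g c
    have tri1 : |mn n c - m c| ≤ |mn n c - mn n g| + |mn n g - m c| := abs_sub_le _ _ _
    have tri2 : |mn n g - m c| ≤ |mn n g - m g| + |m g - m c| := abs_sub_le _ _ _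
    have habs : |c - g| = c - g := abs_of_nonneg (by linarith)
    have habs2 : |g - c| = c - g := by rw [abs_sub_comm, habs]
    rw [habs] at t1
    rw [habs2] at t3
    rw [← hg] at t2
    linarith
  · have h1 : m C ≤ m c := hmono hcC.le
    have h2 : m c ≤ θ := hmθ c
    have h3 : mn n C ≤ mn n c := (hmnmono n) hcC.le
    have h4 : mn n c ≤ A n := hmA n c
    have h5 : |mn n C - m C| ≤ ε/4 := by
      have := hgrid Mp (Finset.mem_range.mpr (by omega))
      rwa [hgridMp] at this
    have h6 := abs_le.mp h5
    have h7 := abs_le.mp hAe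
    rw [abs_le]
    constructor <;> linarith

end Unif

set_option maxHeartbeats 1000000 in
/-- Uniform almost-sure convergence of the empirical Lorenz curve
(Goldie/Gastwirth): for i.i.d. nonnegative `Y₁, Y₂, …` with `0 < E[Y₁] < ∞`,
quantile function `Q t = inf {y | F y ≥ t}` and population Lorenz curve
`L p = (1/E[Y₁]) ∫₀ᵖ Q`, the empirical Lorenz curve
`L̂ₙ(k/n) = (sum of k smallest of Y₁,…,Yₙ)/(Y₁+⋯+Yₙ)` satisfies, almost surely,
`max_{1 ≤ k ≤ n} |L̂ₙ(k/n) − L(k/n)| → 0` as `n → ∞`. -/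
theorem empirical_lorenz_uniform_as_convergence
    {Ω : Type*} [MeasurableSpace Ω] (μ : Measure Ω) [IsProbabilityMeasure μ]
    (Y : ℕ → Ω → ℝ)
    (hmeas : ∀ i, Measurable (Y i))
    (hindep : ProbabilityTheory.iIndepFun Y μ)
    (hident : ∀ i, Measure.map (Y i) μ = Measure.map (Y 0) μ)
    (hnonneg : ∀ i ω, 0 ≤ Y i ω)
    (hint : Integrable (Y 0) μ)
    (hmean : 0 < ∫ ω, Y 0 ω ∂μ)
    (F : ℝ → ℝ) (hF : ∀ y, F y = (μ {ω | Y 0 ω ≤ y}).toReal)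
    (Q : ℝ → ℝ) (hQ : ∀ t, Q t = sInf {y : ℝ | t ≤ F y})
    (L : ℝ → ℝ)
    (hL : ∀ p, L p = (1 / ∫ ω, Y 0 ω ∂μ) * ∫ t in (0:ℝ)..p, Q t)
    (Lhat : ℕ → ℕ → Ω → ℝ)
    (hLhat : ∀ n k ω, Lhat n k ω =
      (((List.ofFn fun i : Fin n => Y i ω).insertionSort (· ≤ ·)).take k).sum /
        ((List.ofFn fun i : Fin n => Y i ω)).sum) :
    ∀ᵐ ω ∂μ, ∀ ε > 0, ∃ N : ℕ, ∀ n ≥ N, ∀ k : ℕ, 1 ≤ k → k ≤ n →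
      |Lhat n k ω - L ((k : ℝ) / (n : ℝ))| < ε := by
  classical
  set θ : ℝ := ∫ ω, Y 0 ω ∂μ with hθdef
  set ν : Measure ℝ := Measure.map (Y 0) μ with hνdef
  haveI : IsProbabilityMeasure ν := Measure.isProbabilityMeasure_map (hmeas 0).aemeasurable
  have hsupp : ν (Iio 0) = 0 := by
    rw [hνdef, Measure.map_apply (hmeas 0) measurableSet_Iio]
    have he : Y 0 ⁻¹' (Iio 0) = ∅ := by
      ext ω; simp only [mem_preimage, mem_Iio, mem_empty_iff_false, iff_false, not_lt]
      exact hnonneg 0 ω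
    simp [he]
  have hFc : ∀ y, F y = cdf ν y := by
    intro y
    rw [hF y, cdf_eq_real, measureReal_def, hνdef, Measure.map_apply (hmeas 0) measurableSet_Iic]
    rfl
  have hQq : ∀ t, Q t = qf ν t := by
    intro t
    rw [hQ t, qf]
    congr 1
    ext y
    simp only [mem_setOf_eq, hFc]
  have hid : Integrable (fun x : ℝ => x) ν := by
    rw [hνdef]
    exact (integrable_map_measure aestronglyMeasurable_id
      (hmeas 0).aemeasurable).mpr hint
  have hident' : ∀ i, ProbabilityTheory.IdentDistrib (Y i) (Y 0) μ μ := fun i =>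
    ⟨(hmeas i).aemeasurable, (hmeas 0).aemeasurable, hident i⟩
  have hindep' : Pairwise (Function.onFun (ProbabilityTheory.IndepFun · · μ) Y) := fun i j hij =>
    hindep.indepFun hij
  have hθint : ∫ x, x ∂ν = θ := by
    rw [hνdef, hθdef]
    exact integral_map (hmeas 0).aemeasurable aestronglyMeasurable_id
  set mfun : ℝ → ℝ := fun c => ∫ ω, min (Y 0 ω) c ∂μ with hmdef
  have hminint : ∀ c, Integrable (fun ω => min (Y 0 ω) c) μ := fun c =>
    hint.inf (integrable_const c)
  have hmc : ∀ c, ∫ x, min x c ∂ν = mfun c := by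
    intro c
    rw [hνdef]
    exact integral_map (hmeas 0).aemeasurable
      (measurable_id.min measurable_const).aestronglyMeasurable
  have hIeq : ∫ t in Ioo (0:ℝ) 1, qf ν t = θ := by
    exact (qf_integral_eq hsupp (g := fun x : ℝ => x) measurable_id).trans hθint
  have hmint : ∀ c, ∫ t in Ioo (0:ℝ) 1, min (qf ν t) c = mfun c := by
    intro c
    exact (qf_integral_eq hsupp (g := fun x : ℝ => min x c)
      (measurable_id.min measurable_const)).trans (hmc c)
  -- properties of mfun
  have hml : ∀ c c', |mfun c - mfun c'| ≤ |c - c'| := by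
    intro c c'
    rw [hmdef]
    rw [← integral_sub (hminint c) (hminint c')]
    calc |∫ ω, (min (Y 0 ω) c - min (Y 0 ω) c') ∂μ|
        ≤ ∫ ω, |min (Y 0 ω) c - min (Y 0 ω) c'| ∂μ := by
          simpa [Real.norm_eq_abs] using
            norm_integral_le_integral_norm (fun ω => min (Y 0 ω) c - min (Y 0 ω) c') (μ := μ)
      _ ≤ ∫ _ω, |c - c'| ∂μ := by
          refine integral_mono ((hminint c).sub (hminint c')).abs (integrable_const _) ?_
          intro ω
          exact min_lip (Y 0 ω) c c'
      _ = |c - c'| := by simp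
  have hmmono : Monotone mfun := by
    intro c c' hcc
    exact integral_mono (hminint c) (hminint c') fun ω => min_le_min le_rfl hcc
  have hmub : ∀ c, mfun c ≤ θ := fun c =>
    integral_mono (hminint c) hint fun ω => min_le_left _ _
  have hmlowc : ∀ c ≤ 0, mfun c = c := by
    intro c hc
    rw [hmdef]
    have : ∀ ω, min (Y 0 ω) c = c := fun ω => min_eq_right (hc.trans (hnonneg 0 ω))
    simp only [this]
    simp
  have htail : ∀ ε > 0, ∃ q : ℚ, 0 ≤ q ∧ θ - mfun ((q : ℚ) : ℝ) < ε := by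
    have htd : Filter.Tendsto (fun j : ℕ => mfun ((j : ℕ) : ℝ)) Filter.atTop (nhds θ) := by
      rw [hθdef]
      apply tendsto_integral_of_dominated_convergence (fun ω => |Y 0 ω|)
      · exact fun j => ((hmeas 0).min measurable_const).aestronglyMeasurable
      · exact hint.abs
      · intro j
        refine Filter.Eventually.of_forall fun ω => ?_
        rw [Real.norm_eq_abs, abs_of_nonneg (le_min (hnonneg 0 ω) (Nat.cast_nonneg j))]
        exact (min_le_left _ _).trans (le_abs_self _)
      · refine Filter.Eventually.of_forall fun ω => ?_
        have hev : ∀ᶠ j : ℕ in Filter.atTop, min (Y 0 ω) (j : ℝ) = Y 0 ω :=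
          Filter.eventually_atTop.mpr ⟨⌈Y 0 ω⌉₊, fun j hj =>
            min_eq_left ((Nat.le_ceil _).trans (Nat.cast_le.mpr hj))⟩
        exact Filter.Tendsto.congr' (Filter.EventuallyEq.symm hev) tendsto_const_nhds
    intro ε hε
    obtain ⟨j, hj⟩ := (Metric.tendsto_atTop.mp htd) ε hε
    refine ⟨(j : ℚ), Nat.cast_nonneg j, ?_⟩
    have h1 := hj j le_rfl
    rw [Real.dist_eq] at h1
    have h2 : (((j : ℚ) : ℝ)) = ((j : ℕ) : ℝ) := by push_cast; ring
    rw [h2]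
    have := neg_abs_le (mfun ((j : ℕ) : ℝ) - θ)
    linarith
  -- SLLN
  have hslln : ∀ᵐ ω ∂μ, Filter.Tendsto (fun n => (∑ i ∈ Finset.range n, Y i ω) / n)
      Filter.atTop (nhds θ) := ProbabilityTheory.strong_law_ae_real Y hint hindep' hident'
  have hsllnq : ∀ᵐ ω ∂μ, ∀ q : ℚ, Filter.Tendsto
      (fun n => (∑ i ∈ Finset.range n, min (Y i ω) ((q : ℚ) : ℝ)) / n)
      Filter.atTop (nhds (mfun ((q : ℚ) : ℝ))) := by
    rw [ae_all_iff]
    intro q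
    have hφ : Measurable (fun x : ℝ => min x ((q : ℚ) : ℝ)) :=
      measurable_id.min measurable_const
    exact ProbabilityTheory.strong_law_ae_real (fun i ω => min (Y i ω) ((q : ℚ) : ℝ))
      (hminint _)
      (fun i j hij => ((hindep.indepFun hij).comp hφ hφ))
      (fun i => (hident' i).comp hφ)
  filter_upwards [hslln, hsllnq] with ω hω hωq
  set A : ℕ → ℝ := fun n => (∑ i ∈ Finset.range n, Y i ω) / n with hAdef
  set mn : ℕ → ℝ → ℝ := fun n c => (∑ i ∈ Finset.range n, min (Y i ω) c) / n with hmndef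
  have hmnlip : ∀ n c c', |mn n c - mn n c'| ≤ |c - c'| := by
    intro n c c'
    rcases Nat.eq_zero_or_pos n with hn | hn
    · simp [hmndef, hn]
    · have hnR : (0:ℝ) < n := by exact_mod_cast hn
      rw [hmndef]
      simp only
      rw [div_sub_div_same, ← Finset.sum_sub_distrib, abs_div, Nat.abs_cast,
        div_le_iff₀ hnR]
      calc |∑ i ∈ Finset.range n, (min (Y i ω) c - min (Y i ω) c')|
          ≤ ∑ i ∈ Finset.range n, |min (Y i ω) c - min (Y i ω) c'| :=
            Finset.abs_sum_le_sum_abs _ _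
        _ ≤ (Finset.range n).card • |c - c'| :=
            Finset.sum_le_card_nsmul _ _ _ (fun i _ => min_lip (Y i ω) c c')
        _ = |c - c'| * n := by
            rw [Finset.card_range, nsmul_eq_mul]; ring
  have hmnmono : ∀ n, Monotone (mn n) := by
    intro n c c' h
    rcases Nat.eq_zero_or_pos n with hn | hn
    · simp [hmndef, hn]
    · have hnR : (0:ℝ) < n := by exact_mod_cast hn
      rw [hmndef]
      simp only
      exact (div_le_div_iff_of_pos_right hnR).mpr
        (Finset.sum_le_sum fun i _ => min_le_min le_rfl h)
  have hmA : ∀ n c, mn n c ≤ A n := by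
    intro n c
    rcases Nat.eq_zero_or_pos n with hn | hn
    · simp [hmndef, hAdef, hn]
    · have hnR : (0:ℝ) < n := by exact_mod_cast hn
      rw [hmndef, hAdef]
      simp only
      exact (div_le_div_iff_of_pos_right hnR).mpr
        (Finset.sum_le_sum fun i _ => min_le_left _ _)
  have hlow : ∀ n, 1 ≤ n → ∀ c ≤ 0, mn n c = mfun c := by
    intro n hn c hc
    rw [hmlowc c hc, hmndef]
    simp only
    have hcongr : ∀ i ∈ Finset.range n, min (Y i ω) c = c := fun i _ =>
      min_eq_right (hc.trans (hnonneg i ω))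
    rw [Finset.sum_congr rfl hcongr, Finset.sum_const, Finset.card_range, nsmul_eq_mul]
    have hnR : (0:ℝ) < n := by exact_mod_cast hn
    field_simp
  have hunif := unif_conv mfun mn A θ hmean hω hωq hml hmnlip hmmono hmnmono hmA hmub
    hlow htail
  intro ε hε
  set η : ℝ := min (θ/2) (ε*θ/16) with hηdef
  have hη : 0 < η := lt_min (by linarith) (by positivity)
  obtain ⟨N1, hN1⟩ := hunif η hη
  obtain ⟨N2, hN2⟩ := Metric.tendsto_atTop.mp hω η hη
  refine ⟨max (max N1 N2) 1, fun n hn k hk1 hkn => ?_⟩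
  have hnN1 : N1 ≤ n := le_trans (le_trans (le_max_left _ _) (le_max_left _ _)) hn
  have hnN2 : N2 ≤ n := le_trans (le_trans (le_max_right _ _) (le_max_left _ _)) hn
  have hn1 : 1 ≤ n := le_trans (le_max_right _ _) hn
  have hδ := hN1 n hnN1
  have hAn : |A n - θ| ≤ η := by
    have := hN2 n hnN2
    rw [Real.dist_eq] at this
    exact this.le
  have hnR : (0:ℝ) < n := by exact_mod_cast hn1
  have hkR : (0:ℝ) < k := by exact_mod_cast hk1
  set p : ℝ := (k:ℝ)/(n:ℝ) with hpdef
  have hp0 : 0 < p := div_pos hkR hnR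
  have hp1 : p ≤ 1 := by
    rw [hpdef, div_le_one hnR]
    exact_mod_cast hkn
  set l := (List.ofFn fun i : Fin n => Y i ω).insertionSort (· ≤ ·) with hldef
  have hlen : l.length = n := by
    rw [hldef, List.length_insertionSort, List.length_ofFn]
  have hperm : l.Perm (List.ofFn fun i : Fin n => Y i ω) := List.perm_insertionSort _ _
  have hsort : l.Pairwise (· ≤ ·) := List.pairwise_insertionSort _ _
  have hofn_sum : (List.ofFn fun i : Fin n => Y i ω).sum = ∑ i ∈ Finset.range n, Y i ω := by
    rw [List.sum_ofFn]
    exact Fin.sum_univ_eq_sum_range (fun i => Y i ω) n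
  have hmap_sum : ∀ c, (l.map (fun x => min x c)).sum
      = ∑ i ∈ Finset.range n, min (Y i ω) c := by
    intro c
    rw [(hperm.map (fun x => min x c)).sum_eq, List.map_ofFn, List.sum_ofFn]
    exact Fin.sum_univ_eq_sum_range (fun i => min (Y i ω) c) n
  set S := (l.take k).sum with hSdef
  have hkl : k ≤ l.length := by rw [hlen]; exact hkn
  have hcast_len : ((l.length : ℕ) : ℝ) = (n:ℝ) := by rw [hlen]
  have hEmpA : ∀ c, mn n c - (1 - p) * c ≤ S / n := by
    intro c
    have h := take_sum_ge l hkl c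
    rw [hcast_len, hmap_sum c] at h
    calc mn n c - (1 - p) * c
        = ((∑ i ∈ Finset.range n, min (Y i ω) c) - ((n:ℝ) - k) * c) / n := by
          rw [hmndef, hpdef]
          field_simp
          try ring
      _ ≤ S / n := (div_le_div_iff_of_pos_right hnR).mpr h
  have hk1l : k - 1 < l.length := by rw [hlen]; omega
  obtain ⟨hc1, hc2⟩ := sorted_pivot l hsort hk1 hkl
  set ck := l[k-1]'hk1l with hckdef
  have hEmpB : S / n = mn n ck - (1 - p) * ck := by
    have h := take_sum_eq l hkl hc1 hc2
    rw [hcast_len, hmap_sum ck] at h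
    rw [hSdef, h, hmndef, hpdef]
    field_simp
    try ring
  have hck0 : 0 ≤ ck := by
    have hmem : ck ∈ l := List.getElem_mem hk1l
    rw [hperm.mem_iff, List.mem_ofFn] at hmem
    obtain ⟨i, hi⟩ := hmem
    rw [← hi]
    simpa using hnonneg i ω
  set b : ℝ := ∫ t in Ioc (0:ℝ) p, qf ν t with hbdef
  have hb0 : 0 ≤ b := setIntegral_nonneg measurableSet_Ioc fun t ht =>
    qf_nonneg hsupp ht.1
  have hsplit := split01 (qf_integrableOn_Ioc hsupp hid) hp0.le hp1
  have hbθ : b ≤ θ := by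
    have h2 : 0 ≤ ∫ t in Ioc p 1, qf ν t := setIntegral_nonneg measurableSet_Ioc
      fun t ht => qf_nonneg hsupp (lt_trans hp0 ht.1)
    rw [hIeq, ← hbdef] at hsplit
    linarith
  have hPopA : ∀ c, mfun c - c * (1 - p) ≤ b := by
    intro c
    have h := pop_le hsupp hid hp0 hp1 c
    rwa [hmint c] at h
  have hSb : |S / n - b| ≤ 2 * η := by
    rcases eq_or_lt_of_le hp1 with hpe | hplt
    · have hb1 : b = θ := by
        have h1 : b = ∫ t in Ioc (0:ℝ) 1, qf ν t := by rw [hbdef, ← hpe]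
        rw [h1, integral_Ioc_eq_integral_Ioo]
        exact hIeq
      have hkn' : k = n := by
        have h := hpe
        rw [hpdef, div_eq_one_iff_eq hnR.ne'] at h
        exact_mod_cast h
      have hS : S = ∑ i ∈ Finset.range n, Y i ω := by
        rw [hSdef, List.take_of_length_le (by rw [hlen, hkn']), hperm.sum_eq, hofn_sum]
      have hSA : S / n = A n := by rw [hS, hAdef]
      rw [hSA, hb1]
      linarith [hAn, hη.le]
    · have hup : S / n ≤ b + η := by
        have h2 := (abs_le.mp (hδ ck)).2
        have h3 := hPopA ck
        have hcm : (1 - p) * ck = ck * (1 - p) := mul_comm _ _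
        rw [hEmpB]
        linarith
      have hdn : b ≤ S / n + η := by
        have h2 := (abs_le.mp (hδ (qf ν p))).1
        have h3 := pop_ge hsupp hid hp0 hplt
        rw [hmint (qf ν p)] at h3
        have h4 := hEmpA (qf ν p)
        have hcm : qf ν p * (1 - p) = (1 - p) * qf ν p := mul_comm _ _
        linarith
      rw [abs_le]
      constructor <;> linarith [hη.le]
  have hAn_lb : θ/2 ≤ A n := by
    have h1 := (abs_le.mp hAn).1
    have h2 : η ≤ θ/2 := min_le_left _ _
    linarith
  have hApos : 0 < A n := lt_of_lt_of_le (by linarith) hAn_lb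
  have hTn : ∑ i ∈ Finset.range n, Y i ω = n * A n := by
    rw [hAdef]
    field_simp
  have hLhat' : Lhat n k ω = (S / n) / A n := by
    rw [hLhat n k ω, hofn_sum, hTn, div_div]
  have hLp : L p = b / θ := by
    rw [hL p]
    have hIQ : ∫ t in (0:ℝ)..p, Q t = b := by
      rw [intervalIntegral.integral_of_le hp0.le]
      simp only [hQq]
      try exact hbdef.symm
    rw [hIQ]
    ring
  rw [hLhat', hLp]
  set a := S / n with hadef
  have hkey : a / A n - b / θ = ((a - b) * θ + b * (θ - A n)) / (A n * θ) := by
    field_simp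
    ring
  rw [hkey, abs_div, abs_of_pos (show (0:ℝ) < A n * θ by positivity),
    div_lt_iff₀ (by positivity)]
  have hnum : |(a - b) * θ + b * (θ - A n)| ≤ 2*η*θ + θ*η := by
    calc |(a - b) * θ + b * (θ - A n)| ≤ |(a - b) * θ| + |b * (θ - A n)| := abs_add_le _ _
      _ = |a - b| * θ + b * |θ - A n| := by
          rw [abs_mul, abs_mul, abs_of_pos hmean, abs_of_nonneg hb0]
      _ ≤ 2*η*θ + θ*η := by
          have ht : |θ - A n| ≤ η := by rw [abs_sub_comm]; exact hAn
          have hs1 : |a - b| * θ ≤ 2*η*θ := mul_le_mul_of_nonneg_right hSb hmean.le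
          have hs2 : b * |θ - A n| ≤ θ * η := mul_le_mul hbθ ht (abs_nonneg _) hmean.le
          linarith
  have hη2 : η ≤ ε*θ/16 := min_le_right _ _
  have h1 : 2*η*θ + θ*η ≤ 3*(ε*θ/16)*θ := by
    have e : 2*η*θ + θ*η = (2*η+η)*θ := by ring
    rw [e]
    exact mul_le_mul_of_nonneg_right (by linarith) hmean.le
  have h2 : 3*(ε*θ/16)*θ < ε * (A n * θ) := by
    have hh : ε * (θ/2 * θ) ≤ ε * (A n * θ) :=
      mul_le_mul_of_nonneg_left (mul_le_mul_of_nonneg_right hAn_lb hmean.le) hε.le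
    have hp : 0 < ε * θ * θ := by positivity
    have e1 : 3*(ε*θ/16)*θ = (3/16)*(ε*θ*θ) := by ring
    have e2 : ε*(θ/2*θ) = (1/2)*(ε*θ*θ) := by ring
    rw [e1]
    rw [e2] at hh
    linarith
  linarith
end Quantile
end
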